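/- arXiv:1505.01352 — 2 statements merged into one kernel-verified Lean document; each statement's English description precedes it below -/
import Mathlib

section
/- Let G be a finite Camina group, i.e., G has a normal subgroup H with {e} < H < G such that every coset Hx with x ∉ H is contained in a conjugacy class of G. Then G is a generalized B-group: no proper central S-ring over G is primitive. In fact, every primitive central S-ring over G is trivial (has rank 2). -/
open scoped Pointwise

/-- The sum `X̲ = ∑_{x ∈ X} x` of a subset `X` of `G`, as an element of the
integral group ring `ℤG = MonoidAlgebra ℤ G`. -/
noncomputable def clsSum {G : Type*} [Group G] [DecidableEq G] (X : Finset G) : MonoidAlgebra ℤ G :=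
  ∑ x ∈ X, MonoidAlgebra.single x 1

/-- A Schur ring (S-ring) over a finite group `G`: a partition `S` of `G` into nonempty
classes such that `{1} ∈ S`, `S` is closed under taking inverses of classes, and the
`ℤ`-span of the class sums is closed under multiplication (hence a subring of `ℤG`). -/
structure SRing (G : Type*) [Group G] [Fintype G] [DecidableEq G] where
  S : Finset (Finset G)
  nonempty_mem : ∀ X ∈ S, X.Nonempty
  cover : ∀ g : G, ∃! X : Finset G, X ∈ S ∧ g ∈ X
  one_mem : ({1} : Finset G) ∈ S
  inv_mem : ∀ X ∈ S, X⁻¹ ∈ S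
  mul_closed : ∀ ξ η : MonoidAlgebra ℤ G,
    ξ ∈ Submodule.span ℤ (clsSum '' (S : Set (Finset G))) →
    η ∈ Submodule.span ℤ (clsSum '' (S : Set (Finset G))) →
    ξ * η ∈ Submodule.span ℤ (clsSum '' (S : Set (Finset G)))

namespace SRing

variable {G : Type*} [Group G] [Fintype G] [DecidableEq G]

/-- The underlying `ℤ`-module of the S-ring `A` inside `ℤG`. -/
noncomputable def span (A : SRing G) : Submodule ℤ (MonoidAlgebra ℤ G) :=
  Submodule.span ℤ (clsSum '' (A.S : Set (Finset G)))

/-- An S-ring is central if it is contained in the center of `ℤG`. -/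
def IsCentral (A : SRing G) : Prop :=
  ∀ ξ ∈ A.span, ∀ η : MonoidAlgebra ℤ G, ξ * η = η * ξ

/-- A set `T ⊆ G` is an `A`-set if it is a union of basic sets of `A`. -/
def IsASet (A : SRing G) (T : Set G) : Prop :=
  ∀ X ∈ A.S, (∃ x ∈ X, x ∈ T) → ∀ x ∈ X, x ∈ T

/-- An S-ring is primitive if its only `A`-subgroups are trivial. -/
def IsPrimitive (A : SRing G) : Prop :=
  ∀ H : Subgroup G, A.IsASet (H : Set G) → H = ⊥ ∨ H = ⊤

end SRing

/-- The conjugacy class of `g` in `G`, as a finset. -/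
def conjClass {G : Type*} [Group G] [Fintype G] [DecidableEq G] (g : G) : Finset G :=
  Finset.univ.filter (fun h => ∃ c : G, c * g * c⁻¹ = h)

/-- The partition of `G` into conjugacy classes; it is the basic-set partition of the
full center `Z(ℤG)` viewed as an S-ring. -/
def classPartition (G : Type*) [Group G] [Fintype G] [DecidableEq G] : Finset (Finset G) :=
  Finset.univ.image (fun g : G => conjClass g)

/-- The basic-set partition `{{e}, G \ {e}}` of the trivial S-ring over `G`. -/
def trivialPartition (G : Type*) [Group G] [Fintype G] [DecidableEq G] : Finset (Finset G) :=
  {({1} : Finset G), Finset.univ \ {1}}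

/-- A central S-ring is proper if it lies strictly between `Z(ℤG)` and the trivial
S-ring, i.e. its partition is neither the conjugacy class partition nor the trivial one. -/
def SRing.IsProper {G : Type*} [Group G] [Fintype G] [DecidableEq G] (A : SRing G) : Prop :=
  A.IsCentral ∧ A.S ≠ classPartition G ∧ A.S ≠ trivialPartition G

/-- `G` is a generalized B-group if no proper central S-ring over `G` is primitive. -/
def IsGeneralizedBGroup (G : Type*) [Group G] [Fintype G] [DecidableEq G] : Prop :=
  ∀ A : SRing G, A.IsProper → ¬ A.IsPrimitive

section Aux
open Finset
variable {G : Type*} [Group G] [DecidableEq G]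

lemma clsSum_apply (X : Finset G) (g : G) :
    (clsSum X).coeff g = if g ∈ X then (1 : ℤ) else 0 := by
  unfold clsSum
  rw [MonoidAlgebra.coeff_sum, Finsupp.finset_sum_apply]
  simp only [MonoidAlgebra.coeff_single]
  rw [Finset.sum_congr rfl (fun x _ => Finsupp.single_apply)]
  exact Finset.sum_ite_eq' X g (fun _ => (1:ℤ))

lemma clsSum_mul_apply (X Y : Finset G) (g : G) :
    (clsSum X * clsSum Y).coeff g = ((X.filter fun x => x⁻¹ * g ∈ Y).card : ℤ) := by
  unfold clsSum
  rw [Finset.sum_mul_sum]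
  simp_rw [MonoidAlgebra.single_mul_single, one_mul]
  rw [MonoidAlgebra.coeff_sum, Finsupp.finset_sum_apply]
  have h2 : ∀ x : G, ((∑ y ∈ Y, MonoidAlgebra.single (x*y) (1:ℤ)).coeff g)
      = if x⁻¹ * g ∈ Y then (1:ℤ) else 0 := by
    intro x
    rw [MonoidAlgebra.coeff_sum, Finsupp.finset_sum_apply]
    simp only [MonoidAlgebra.coeff_single]
    rw [Finset.sum_congr rfl (fun y _ => Finsupp.single_apply)]
    have : ∀ y ∈ Y, (if x*y = g then (1:ℤ) else 0) = if y = x⁻¹*g then (1:ℤ) else 0 := by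
      intro y _
      congr 1
      simp [eq_inv_mul_iff_mul_eq]
    rw [Finset.sum_congr rfl this]
    exact Finset.sum_ite_eq' Y (x⁻¹*g) (fun _ => (1:ℤ))
  rw [Finset.sum_congr rfl (fun x _ => h2 x)]
  exact Finset.sum_boole _ _

lemma clsSum_single_mul_apply (X : Finset G) (c g : G) :
    (MonoidAlgebra.single c (1:ℤ) * clsSum X).coeff g = if c⁻¹ * g ∈ X then (1:ℤ) else 0 := by
  classical
  have := clsSum_mul_apply ({c} : Finset G) X g
  have h1 : clsSum ({c} : Finset G) = MonoidAlgebra.single c 1 := by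
    unfold clsSum; simp
  rw [h1] at this
  rw [this]
  by_cases h : c⁻¹ * g ∈ X <;> simp [Finset.filter_singleton, h]

lemma clsSum_mul_single_apply (X : Finset G) (c g : G) :
    (clsSum X * MonoidAlgebra.single c (1:ℤ)).coeff g = if g * c⁻¹ ∈ X then (1:ℤ) else 0 := by
  classical
  have := clsSum_mul_apply X ({c} : Finset G) g
  have h1 : clsSum ({c} : Finset G) = MonoidAlgebra.single c 1 := by
    unfold clsSum; simp
  rw [h1] at this
  rw [this]
  have : (X.filter fun x => x⁻¹ * g ∈ ({c} : Finset G)) = X.filter fun x => x = g * c⁻¹ := by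
    apply Finset.filter_congr
    intro x _
    simp only [Finset.mem_singleton]
    constructor
    · intro h; rw [eq_comm, eq_inv_mul_iff_mul_eq] at h; rw [← h]; group
    · intro h; subst h; group
  rw [this]
  by_cases h : g * c⁻¹ ∈ X
  · rw [if_pos h]
    have : X.filter (fun x => x = g * c⁻¹) = {g * c⁻¹} := by
      ext x; simp only [Finset.mem_filter, Finset.mem_singleton]
      exact ⟨fun ⟨_, hx⟩ => hx, fun hx => ⟨hx ▸ h, hx⟩⟩
    simp [this]
  · rw [if_neg h]
    have : X.filter (fun x => x = g * c⁻¹) = ∅ := by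
      ext x; simp only [Finset.mem_filter, Finset.mem_singleton, Finset.notMem_empty, iff_false]
      rintro ⟨hx, rfl⟩; exact h hx
    simp [this]



end Aux

section Aux2
open Finset
variable {G : Type*} [Group G] [Fintype G] [DecidableEq G]

namespace SRing

variable (A : SRing G)

lemma unique_basic {X Y : Finset G} {g : G} (hX : X ∈ A.S) (hY : Y ∈ A.S)
    (hgX : g ∈ X) (hgY : g ∈ Y) : X = Y := by
  obtain ⟨W, _, hu⟩ := A.cover g
  rw [hu X ⟨hX, hgX⟩, hu Y ⟨hY, hgY⟩]

lemma exists_basic (g : G) : ∃ X ∈ A.S, g ∈ X := by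
  obtain ⟨W, ⟨h1, h2⟩, _⟩ := A.cover g
  exact ⟨W, h1, h2⟩

lemma basic_eq_one {X : Finset G} (hX : X ∈ A.S) (h1 : (1:G) ∈ X) : X = {1} :=
  A.unique_basic hX A.one_mem h1 (Finset.mem_singleton_self 1)

lemma one_not_mem {X : Finset G} (hX : X ∈ A.S) (hX1 : X ≠ {1}) : (1:G) ∉ X :=
  fun h => hX1 (A.basic_eq_one hX h)

lemma clsSum_mem_span {X : Finset G} (hX : X ∈ A.S) : clsSum X ∈ A.span :=
  Submodule.subset_span ⟨X, by simpa using hX, rfl⟩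

lemma mul_mem_span {X Y : Finset G} (hX : X ∈ A.S) (hY : Y ∈ A.S) :
    clsSum X * clsSum Y ∈ A.span :=
  A.mul_closed _ _ (A.clsSum_mem_span hX) (A.clsSum_mem_span hY)

lemma constancy {ξ : MonoidAlgebra ℤ G} (hξ : ξ ∈ A.span) {X : Finset G} (hX : X ∈ A.S)
    {x y : G} (hx : x ∈ X) (hy : y ∈ X) : ξ.coeff x = ξ.coeff y := by
  refine Submodule.span_induction (p := fun ξ _ => ξ.coeff x = ξ.coeff y) ?_ ?_ ?_ ?_ hξ
  · rintro ζ ⟨Y, hY, rfl⟩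
    rw [clsSum_apply, clsSum_apply]
    simp only [Finset.mem_coe] at hY
    by_cases h : x ∈ Y
    · rw [if_pos h, if_pos (A.unique_basic hX hY hx h ▸ hy)]
    · rw [if_neg h, if_neg (fun h' => h (A.unique_basic hX hY hx (A.unique_basic hY hX h' hy ▸ hx) ▸ hx))]
  · rfl
  · intro a b _ _ ha hb
    rw [MonoidAlgebra.coeff_add, Finsupp.add_apply, Finsupp.add_apply, ha, hb]
  · intro r a _ ha
    rw [MonoidAlgebra.coeff_smul, Finsupp.smul_apply, Finsupp.smul_apply, ha]

/-- Count used throughout: number of `x ∈ X` with `x⁻¹ g ∈ Y`. -/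
def cnt (X Y : Finset G) (g : G) : ℕ := (X.filter fun x => x⁻¹ * g ∈ Y).card

lemma cnt_constancy {X Y W : Finset G} (hX : X ∈ A.S) (hY : Y ∈ A.S) (hW : W ∈ A.S)
    {x y : G} (hx : x ∈ W) (hy : y ∈ W) : cnt X Y x = cnt X Y y := by
  have := A.constancy (A.mul_mem_span hX hY) hW hx hy
  rw [clsSum_mul_apply, clsSum_mul_apply] at this
  exact_mod_cast this

lemma conj_mem (hc : A.IsCentral) {X : Finset G} (hX : X ∈ A.S) {g : G} (hg : g ∈ X)
    (c : G) : c * g * c⁻¹ ∈ X := by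
  have h := hc (clsSum X) (A.clsSum_mem_span hX) (MonoidAlgebra.single c 1)
  have h2 := congrArg (fun ξ : MonoidAlgebra ℤ G => ξ.coeff (c * g)) h
  rw [clsSum_mul_single_apply, clsSum_single_mul_apply] at h2
  rw [inv_mul_cancel_left] at h2
  rw [if_pos hg] at h2
  by_contra hmem
  rw [if_neg (by simpa [mul_assoc] using hmem)] at h2
  exact one_ne_zero h2.symm

end SRing
end Aux2

section Aux3
open Finset
namespace SRing
variable {G : Type*} [Group G] [Fintype G] [DecidableEq G] (A : SRing G)

/-- The left stabilizer `{g : gX = X}` of a finite subset `X` of `G`. -/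
def stab (X : Finset G) : Subgroup G where
  carrier := {g | ∀ x ∈ X, g * x ∈ X}
  one_mem' := by intro x hx; simpa using hx
  mul_mem' := by
    intro a b ha hb x hx
    rw [mul_assoc]
    exact ha _ (hb _ hx)
  inv_mem' := by
    intro g hg x hx
    have hsurj := Finset.surj_on_of_inj_on_of_card_le (s := X) (t := X)
      (fun a _ => g * a) (fun a ha => hg a ha)
      (fun a₁ a₂ _ _ h => mul_left_cancel h) le_rfl
    obtain ⟨a, ha, rfl⟩ := hsurj x hx
    simpa using ha

lemma mem_stab {X : Finset G} {g : G} : g ∈ stab X ↔ ∀ x ∈ X, g * x ∈ X := Iff.rfl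

lemma cnt_inv_eq (X : Finset G) (g : G) :
    cnt X X⁻¹ g = (X.filter fun x => g⁻¹ * x ∈ X).card := by
  unfold cnt
  congr 1
  apply Finset.filter_congr
  intro x _
  rw [Finset.mem_inv']
  simp [mul_inv_rev]

lemma mem_stab_iff_cnt {X : Finset G} {g : G} :
    g ∈ stab X ↔ cnt X X⁻¹ g = X.card := by
  rw [cnt_inv_eq]
  constructor
  · intro hg
    have hg' : g⁻¹ ∈ stab X := (stab X).inv_mem hg
    rw [Finset.filter_true_of_mem (fun x hx => hg' x hx)]
  · intro h
    have heq : X.filter (fun x => g⁻¹ * x ∈ X) = X :=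
      Finset.eq_of_subset_of_card_le (Finset.filter_subset _ _) (le_of_eq h.symm)
    have : g⁻¹ ∈ stab X := by
      intro x hx
      have : x ∈ X.filter (fun x => g⁻¹ * x ∈ X) := heq.symm ▸ hx
      exact (Finset.mem_filter.mp this).2
    simpa using (stab X).inv_mem this

lemma stab_isASet {X : Finset G} (hX : X ∈ A.S) : A.IsASet ((stab X : Subgroup G) : Set G) := by
  intro W hW ⟨w, hwW, hw⟩ x hxW
  have hw' : cnt X X⁻¹ w = X.card := mem_stab_iff_cnt.mp hw
  have := A.cnt_constancy hX (A.inv_mem X hX) hW hxW hwW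
  exact mem_stab_iff_cnt.mpr (this.trans hw')

lemma stab_ne_top {X : Finset G} (hX : X ∈ A.S) (hX1 : X ≠ {1}) : stab X ≠ ⊤ := by
  intro htop
  obtain ⟨x₀, hx₀⟩ := A.nonempty_mem X hX
  have : x₀⁻¹ ∈ stab X := htop ▸ Subgroup.mem_top _
  have h1 : (1:G) ∈ X := by simpa using this x₀ hx₀
  exact A.one_not_mem hX hX1 h1

end SRing
end Aux3

section Camina
open Finset
namespace SRing
variable {G : Type*} [Group G] [Fintype G] [DecidableEq G] (A : SRing G)
variable {H : Subgroup G}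

/-- Camina: an element of a basic set outside `H` can be multiplied by `H` and stay
in the basic set (and outside `H`). -/
lemma camina_mem (hc : A.IsCentral)
    (hCamina : ∀ x : G, x ∉ H → ∀ h ∈ H, ∃ c : G, c * x * c⁻¹ = h * x)
    {X : Finset G} (hX : X ∈ A.S) {x : G} (hxX : x ∈ X) (hxH : x ∉ H)
    {h : G} (hh : h ∈ H) : h * x ∈ X ∧ h * x ∉ H := by
  obtain ⟨c, hcx⟩ := hCamina x hxH h hh
  refine ⟨hcx ▸ A.conj_mem hc hX hxX c, fun hmem => hxH ?_⟩
  have : h⁻¹ * (h * x) ∈ H := H.mul_mem (H.inv_mem hh) hmem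
  simpa using this

/-- Step A: every basic set meets `H`. -/
lemma basic_meets (hc : A.IsCentral) (hp : A.IsPrimitive) (hbot : H ≠ ⊥)
    (hCamina : ∀ x : G, x ∉ H → ∀ h ∈ H, ∃ c : G, c * x * c⁻¹ = h * x)
    {X : Finset G} (hX : X ∈ A.S) : ∃ x ∈ X, x ∈ H := by
  by_contra hno
  push_neg at hno
  have hX1 : X ≠ {1} := by
    intro h; exact hno 1 (h ▸ Finset.mem_singleton_self 1) H.one_mem
  have hle : H ≤ stab X := by
    intro h hh x hx
    exact (A.camina_mem hc hCamina hX hx (hno x hx) hh).1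
  rcases hp (stab X) (A.stab_isASet hX) with hb | ht
  · exact hbot (le_bot_iff.mp (hb ▸ hle))
  · exact A.stab_ne_top hX hX1 ht

/-- Step B: no nonidentity basic set is contained in `H`. -/
lemma basic_not_subset (hc : A.IsCentral) (hp : A.IsPrimitive) (hbot : H ≠ ⊥) (htop : H ≠ ⊤)
    (hCamina : ∀ x : G, x ∉ H → ∀ h ∈ H, ∃ c : G, c * x * c⁻¹ = h * x)
    {Z : Finset G} (hZ : Z ∈ A.S) (hZ1 : Z ≠ {1}) : ∃ z ∈ Z, z ∉ H := by
  by_contra hno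
  push_neg at hno
  -- a basic set X with an element t outside H
  obtain ⟨t, ht⟩ : ∃ t : G, t ∉ H := by
    by_contra hall; push_neg at hall
    exact htop ((Subgroup.eq_top_iff' H).mpr hall)
  obtain ⟨X, hX, htX⟩ := A.exists_basic t
  have hX1 : X ≠ {1} := by
    intro h
    rw [h, Finset.mem_singleton] at htX
    exact ht (htX ▸ H.one_mem)
  -- key: any basic set inside H left-"antistabilizes" X
  have key : ∀ W : Finset G, W ∈ A.S → (∀ w ∈ W, w ∈ H) →
      ∀ w ∈ W, ∀ x ∈ X, w⁻¹ * x ∈ X := by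
    intro W hW hWH w hw x hx
    have h0 : cnt W X t = W.card := by
      unfold cnt
      rw [Finset.filter_true_of_mem]
      intro w' hw'
      exact (A.camina_mem hc hCamina hX htX ht (H.inv_mem (hWH w' hw'))).1
    have h1 : cnt W X x = W.card := (A.cnt_constancy hW hX hX hx htX).trans h0
    have heq : W.filter (fun w' => w'⁻¹ * x ∈ X) = W :=
      Finset.eq_of_subset_of_card_le (Finset.filter_subset _ _) (le_of_eq h1.symm)
    have : w ∈ W.filter (fun w' => w'⁻¹ * x ∈ X) := heq.symm ▸ hw
    exact (Finset.mem_filter.mp this).2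
  -- Z ⊆ stab X
  have hZinv : Z⁻¹ ∈ A.S := A.inv_mem Z hZ
  have hZsub : ∀ z ∈ Z, z ∈ stab X := by
    intro z hz x hx
    have hzi : z⁻¹ ∈ Z⁻¹ := by rw [Finset.mem_inv']; simpa using hz
    have := key Z⁻¹ hZinv (fun w hw => by
      rw [Finset.mem_inv'] at hw
      simpa using H.inv_mem (hno _ hw)) z⁻¹ hzi x hx
    simpa using this
  obtain ⟨z₀, hz₀⟩ := A.nonempty_mem Z hZ
  rcases hp (stab X) (A.stab_isASet hX) with hb | htp
  · have : z₀ = 1 := by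
      have := hZsub z₀ hz₀
      rw [hb] at this
      simpa using this
    exact A.one_not_mem hZ hZ1 (this ▸ hz₀)
  · exact A.stab_ne_top hX hX1 htp

end SRing
end Camina

section StepC
open Finset
namespace SRing
variable {G : Type*} [Group G] [Fintype G] [DecidableEq G] (A : SRing G)
variable {H : Subgroup G}

lemma filter_inv_mul_eq_image {B C : Finset G} (hmul : ∀ x ∈ C, ∀ y ∈ C, x * y⁻¹ ∈ B)
    (hsub : C ⊆ B) {x : G} (hx : x ∈ C) :
    B.filter (fun h => h⁻¹ * x ∈ C) = C.image (fun y => x * y⁻¹) := by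
  ext h
  simp only [Finset.mem_filter, Finset.mem_image]
  constructor
  · rintro ⟨hhB, hhx⟩
    exact ⟨h⁻¹ * x, hhx, by group⟩
  · rintro ⟨y, hy, rfl⟩
    refine ⟨hmul x hx y hy, ?_⟩
    have : (x * y⁻¹)⁻¹ * x = y := by group
    rw [this]; exact hy

lemma size_bound (hc : A.IsCentral) (hp : A.IsPrimitive) (hbot : H ≠ ⊥) (htop : H ≠ ⊤)
    (hCamina : ∀ x : G, x ∉ H → ∀ h ∈ H, ∃ c : G, c * x * c⁻¹ = h * x)
    (Hs : Finset G) (hHs : ∀ g : G, g ∈ Hs ↔ g ∈ H)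
    {X : Finset G} (hX : X ∈ A.S) (hX1 : X ≠ {1}) :
    Fintype.card G ≤ 2 * (X ∩ Hs).card + (X \ Hs).card := by
  set a := (X ∩ Hs).card with ha_def
  set m := (X \ Hs).card with hm_def
  set c : G → ℕ := fun g => (X.filter fun x => g⁻¹ * x ∈ X).card with hc_def
  -- m is positive
  have hm : 0 < m := by
    obtain ⟨z, hzX, hzH⟩ := A.basic_not_subset hc hp hbot htop hCamina hX hX1
    exact Finset.card_pos.mpr ⟨z, Finset.mem_sdiff.mpr ⟨hzX, fun h => hzH ((hHs z).mp h)⟩⟩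
  -- constancy of c on basic sets
  have hconst : ∀ W ∈ A.S, ∀ x ∈ W, ∀ y ∈ W, c x = c y := by
    intro W hW x hx y hy
    have := A.cnt_constancy hX (A.inv_mem X hX) hW hx hy
    rw [cnt_inv_eq, cnt_inv_eq] at this
    exact this
  -- (ii) : m ≤ c h for h ∈ H
  have hii : ∀ h : G, h ∈ H → m ≤ c h := by
    intro h hh
    apply Finset.card_le_card
    intro x hx
    rw [Finset.mem_sdiff] at hx
    refine Finset.mem_filter.mpr ⟨hx.1, ?_⟩
    exact (A.camina_mem hc hCamina hX hx.1 (fun hmem => hx.2 ((hHs x).mpr hmem))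
      (H.inv_mem hh)).1
  -- (iii) : m ≤ c g for g ∉ H
  have hiii : ∀ g : G, g ∉ H → m ≤ c g := by
    intro g hg
    obtain ⟨W, hW, hgW⟩ := A.exists_basic g
    obtain ⟨h', hh'W, hh'H⟩ := A.basic_meets hc hp hbot hCamina hW
    rw [hconst W hW g hgW h' hh'W]
    exact hii h' hh'H
  -- (iv) : a*a + Hs.card * m ≤ ∑ h in Hs, c h
  have hiv : a * a + Hs.card * m ≤ ∑ h ∈ Hs, c h := by
    have hpt : ∀ h ∈ Hs, ((X ∩ Hs).filter fun x => h⁻¹ * x ∈ X ∩ Hs).card + m ≤ c h := by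
      intro h hh
      set F1 := (X ∩ Hs).filter fun x => h⁻¹ * x ∈ X ∩ Hs with hF1
      have hdisj : Disjoint F1 (X \ Hs) := by
        rw [Finset.disjoint_left]
        intro x hx hx2
        have : x ∈ Hs := (Finset.mem_inter.mp (Finset.mem_filter.mp hx).1).2
        exact (Finset.mem_sdiff.mp hx2).2 this
      have hsub : F1 ∪ (X \ Hs) ⊆ X.filter fun x => h⁻¹ * x ∈ X := by
        intro x hx
        rcases Finset.mem_union.mp hx with hx1 | hx2
        · obtain ⟨hxXH, hcond⟩ := Finset.mem_filter.mp hx1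
          exact Finset.mem_filter.mpr ⟨(Finset.mem_inter.mp hxXH).1,
            (Finset.mem_inter.mp hcond).1⟩
        · rw [Finset.mem_sdiff] at hx2
          refine Finset.mem_filter.mpr ⟨hx2.1, ?_⟩
          exact (A.camina_mem hc hCamina hX hx2.1 (fun hmem => hx2.2 ((hHs x).mpr hmem))
            (H.inv_mem ((hHs h).mp hh))).1
      calc F1.card + m = (F1 ∪ (X \ Hs)).card := (Finset.card_union_of_disjoint hdisj).symm
        _ ≤ c h := Finset.card_le_card hsub
    calc a * a + Hs.card * m
        = (∑ h ∈ Hs, ((X ∩ Hs).filter fun x => h⁻¹ * x ∈ X ∩ Hs).card) + Hs.card * m := by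
          congr 1
          -- double counting: ∑_{h ∈ Hs} |{x ∈ A' : h⁻¹ x ∈ A'}| = a * a
          have hswap : ∑ h ∈ Hs, ((X ∩ Hs).filter fun x => h⁻¹ * x ∈ X ∩ Hs).card
              = ∑ x ∈ X ∩ Hs, (Hs.filter fun h => h⁻¹ * x ∈ X ∩ Hs).card := by
            simp_rw [Finset.card_filter]
            exact Finset.sum_comm
          rw [hswap]
          have himg : ∀ x ∈ X ∩ Hs, (Hs.filter fun h => h⁻¹ * x ∈ X ∩ Hs).card = a := by
            intro x hx
            rw [filter_inv_mul_eq_image (B := Hs) (C := X ∩ Hs) ?_ ?_ hx]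
            · exact Finset.card_image_of_injective _
                (fun y z h => inv_injective (mul_left_cancel h))
            · intro u hu v hv
              rw [hHs]
              exact H.mul_mem ((hHs u).mp (Finset.mem_inter.mp hu).2)
                (H.inv_mem ((hHs v).mp (Finset.mem_inter.mp hv).2))
            · exact fun u hu => (Finset.mem_inter.mp hu).2
          rw [Finset.sum_congr rfl himg, Finset.sum_const, smul_eq_mul]
      _ = ∑ h ∈ Hs, (((X ∩ Hs).filter fun x => h⁻¹ * x ∈ X ∩ Hs).card + m) := by
          rw [Finset.sum_add_distrib, Finset.sum_const, smul_eq_mul]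
      _ ≤ ∑ h ∈ Hs, c h := Finset.sum_le_sum hpt
  -- (v) : total sum
  have hv : ∑ g : G, c g = X.card * X.card := by
    have hswap : ∑ g : G, c g = ∑ x ∈ X, (Finset.univ.filter fun g : G => g⁻¹ * x ∈ X).card := by
      simp_rw [hc_def, Finset.card_filter]
      exact Finset.sum_comm
    rw [hswap]
    have himg : ∀ x ∈ X, (Finset.univ.filter fun g : G => g⁻¹ * x ∈ X).card = X.card := by
      intro x hx
      rw [filter_inv_mul_eq_image (B := Finset.univ) (C := X)
        (fun _ _ _ _ => Finset.mem_univ _) (Finset.subset_univ X) hx]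
      exact Finset.card_image_of_injective _
        (fun y z h => inv_injective (mul_left_cancel h))
    rw [Finset.sum_congr rfl himg, Finset.sum_const, smul_eq_mul]
  -- split the total sum
  have hsplit : (∑ h ∈ Hs, c h) + ∑ g ∈ Finset.univ \ Hs, c g = ∑ g : G, c g := by
    rw [add_comm]
    exact Finset.sum_sdiff (Finset.subset_univ Hs)
  have hcompl : (Finset.univ \ Hs).card * m ≤ ∑ g ∈ Finset.univ \ Hs, c g := by
    have := Finset.card_nsmul_le_sum (Finset.univ \ Hs) c m
      (fun g hg => hiii g (fun hmem => (Finset.mem_sdiff.mp hg).2 ((hHs g).mpr hmem)))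
    simpa using this
  have hcards : Hs.card + (Finset.univ \ Hs).card = Fintype.card G := by
    have := Finset.card_inter_add_card_sdiff (Finset.univ : Finset G) Hs
    rw [Finset.univ_inter] at this
    rw [this, Finset.card_univ]
  have hXcard : X.card = a + m := (Finset.card_inter_add_card_sdiff X Hs).symm
  -- combine
  have hineq : a * a + Fintype.card G * m ≤ (a + m) * (a + m) := by
    calc a * a + Fintype.card G * m
        = (a * a + Hs.card * m) + (Finset.univ \ Hs).card * m := by
          rw [← hcards]; ring
      _ ≤ (∑ h ∈ Hs, c h) + ∑ g ∈ Finset.univ \ Hs, c g := Nat.add_le_add hiv hcompl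
      _ = ∑ g : G, c g := hsplit
      _ = (a + m) * (a + m) := by rw [hv, hXcard]
  have hmul : Fintype.card G * m ≤ (2 * a + m) * m := by nlinarith
  exact Nat.le_of_mul_le_mul_right hmul hm

end SRing
end StepC

section Main
open Finset
namespace SRing
variable {G : Type*} [Group G] [Fintype G] [DecidableEq G] (A : SRing G)
variable {H : Subgroup G}

lemma main_structure (hc : A.IsCentral) (hp : A.IsPrimitive) (hbot : H ≠ ⊥) (htop : H ≠ ⊤)
    (hCamina : ∀ x : G, x ∉ H → ∀ h ∈ H, ∃ c : G, c * x * c⁻¹ = h * x) :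
    A.S = {({1} : Finset G), Finset.univ \ {1}} := by
  classical
  set Hs : Finset G := Finset.univ.filter (fun g => g ∈ H) with hHs_def
  have hHs : ∀ g : G, g ∈ Hs ↔ g ∈ H := by intro g; simp [hHs_def]
  obtain ⟨h₀, hh₀H, hh₀⟩ : ∃ h₀, h₀ ∈ H ∧ h₀ ≠ 1 := by
    by_contra hcon
    push_neg at hcon
    exact hbot ((Subgroup.eq_bot_iff_forall H).mpr hcon)
  have huniq : ∀ X ∈ A.S, X ≠ {1} → ∀ Y ∈ A.S, Y ≠ {1} → X = Y := by
    intro X hX hX1 Y hY hY1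
    by_contra hne
    have b1 := A.size_bound hc hp hbot htop hCamina Hs hHs hX hX1
    have b2 := A.size_bound hc hp hbot htop hCamina Hs hHs hY hY1
    have hdXY : Disjoint X Y := Finset.disjoint_left.mpr
      (fun g hgX hgY => hne (A.unique_basic hX hY hgX hgY))
    have h1X : (1:G) ∉ X := A.one_not_mem hX hX1
    have h1Y : (1:G) ∉ Y := A.one_not_mem hY hY1
    -- inside H
    have d2 : Disjoint (Y ∩ Hs) ({1} : Finset G) := by
      rw [Finset.disjoint_right]
      intro g hg
      rw [Finset.mem_singleton] at hg
      subst hg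
      exact fun hmem => h1Y (Finset.mem_inter.mp hmem).1
    have d1 : Disjoint (X ∩ Hs) ((Y ∩ Hs) ∪ {1}) := by
      rw [Finset.disjoint_left]
      intro g hg hg2
      rcases Finset.mem_union.mp hg2 with h | h
      · exact (Finset.disjoint_left.mp hdXY (Finset.mem_inter.mp hg).1)
          (Finset.mem_inter.mp h).1
      · rw [Finset.mem_singleton] at h
        subst h
        exact h1X (Finset.mem_inter.mp hg).1
    have c1 : (X ∩ Hs).card + ((Y ∩ Hs).card + 1) ≤ Hs.card := by
      have hsub : (X ∩ Hs) ∪ ((Y ∩ Hs) ∪ {1}) ⊆ Hs := by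
        intro g hg
        rcases Finset.mem_union.mp hg with h | h
        · exact (Finset.mem_inter.mp h).2
        · rcases Finset.mem_union.mp h with h' | h'
          · exact (Finset.mem_inter.mp h').2
          · rw [Finset.mem_singleton] at h'
            subst h'
            exact (hHs 1).mpr H.one_mem
      calc (X ∩ Hs).card + ((Y ∩ Hs).card + 1)
          = ((X ∩ Hs) ∪ ((Y ∩ Hs) ∪ {1})).card := by
            rw [Finset.card_union_of_disjoint d1, Finset.card_union_of_disjoint d2,
              Finset.card_singleton]
        _ ≤ Hs.card := Finset.card_le_card hsub
    -- inside G
    have dd2 : Disjoint Y ({1} : Finset G) := by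
      rw [Finset.disjoint_right]
      intro g hg
      rw [Finset.mem_singleton] at hg
      subst hg; exact h1Y
    have dd1 : Disjoint X (Y ∪ {1}) := by
      rw [Finset.disjoint_left]
      intro g hg hg2
      rcases Finset.mem_union.mp hg2 with h | h
      · exact Finset.disjoint_left.mp hdXY hg h
      · rw [Finset.mem_singleton] at h; subst h; exact h1X hg
    have c2 : X.card + (Y.card + 1) ≤ Fintype.card G := by
      calc X.card + (Y.card + 1) = (X ∪ (Y ∪ {1})).card := by
            rw [Finset.card_union_of_disjoint dd1, Finset.card_union_of_disjoint dd2,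
              Finset.card_singleton]
        _ ≤ (Finset.univ : Finset G).card := Finset.card_le_card (Finset.subset_univ _)
        _ = Fintype.card G := Finset.card_univ
    have e1 : (X ∩ Hs).card + (X \ Hs).card = X.card := Finset.card_inter_add_card_sdiff X Hs
    have e2 : (Y ∩ Hs).card + (Y \ Hs).card = Y.card := Finset.card_inter_add_card_sdiff Y Hs
    have e3 : Hs.card ≤ Fintype.card G := by
      rw [← Finset.card_univ]; exact Finset.card_le_card (Finset.subset_univ _)
    omega
  obtain ⟨X₀, hX₀, hmem₀⟩ := A.exists_basic h₀
  have hX₀1 : X₀ ≠ {1} := by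
    intro h
    rw [h, Finset.mem_singleton] at hmem₀
    exact hh₀ hmem₀
  have hfull : X₀ = Finset.univ \ {1} := by
    ext g
    simp only [Finset.mem_sdiff, Finset.mem_univ, Finset.mem_singleton, true_and]
    constructor
    · intro hg h
      subst h
      exact A.one_not_mem hX₀ hX₀1 hg
    · intro hg
      obtain ⟨W, hW, hgW⟩ := A.exists_basic g
      have hW1 : W ≠ {1} := by
        intro h
        rw [h, Finset.mem_singleton] at hgW
        exact hg hgW
      rw [← huniq W hW hW1 X₀ hX₀ hX₀1]
      exact hgW
  ext W
  simp only [Finset.mem_insert, Finset.mem_singleton]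
  constructor
  · intro hW
    by_cases h : W = {1}
    · exact Or.inl h
    · exact Or.inr (hfull ▸ huniq W hW h X₀ hX₀ hX₀1)
  · rintro (rfl | rfl)
    · exact A.one_mem
    · exact hfull ▸ hX₀

end SRing
end Main


/-- **Camina groups are generalized B-groups** (Theorem 1.4).
Let `G` be a finite Camina group: there is a normal subgroup `H` with `{e} < H < G`
such that every coset `Hx` with `x ∉ H` is contained in a conjugacy class of `G`
(equivalently, `h * x` is conjugate to `x` for all `h ∈ H`). Then every primitive
central S-ring over `G` is trivial (has rank `2`); in particular `G` is a
generalized B-group. -/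
theorem camina_isGeneralizedBGroup {G : Type*} [Group G] [Fintype G] [DecidableEq G]
    (H : Subgroup G) (hnorm : H.Normal) (hbot : H ≠ ⊥) (htop : H ≠ ⊤)
    (hCamina : ∀ x : G, x ∉ H → ∀ h ∈ H, ∃ c : G, c * x * c⁻¹ = h * x) :
    (∀ A : SRing G, A.IsCentral → A.IsPrimitive → A.S.card = 2) ∧
      IsGeneralizedBGroup G := by
  have key : ∀ A : SRing G, A.IsCentral → A.IsPrimitive → A.S = trivialPartition G := by
    intro A hcA hpA
    have := A.main_structure hcA hpA hbot htop hCamina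
    rw [trivialPartition]
    exact this
  obtain ⟨h₀, hh₀H, hh₀⟩ : ∃ h₀, h₀ ∈ H ∧ h₀ ≠ 1 := by
    by_contra hcon
    push_neg at hcon
    exact hbot ((Subgroup.eq_bot_iff_forall H).mpr hcon)
  have hne : ({1} : Finset G) ≠ Finset.univ \ {1} := by
    intro h
    have hmem : h₀ ∈ Finset.univ \ ({1} : Finset G) := by simp [hh₀]
    rw [← h] at hmem
    exact hh₀ (Finset.mem_singleton.mp hmem)
  constructor
  · intro A hcA hpA
    rw [key A hcA hpA]
    unfold trivialPartition
    exact Finset.card_pair hne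
  · intro A hprop hpA
    exact hprop.2.2 (key A hprop.1 hpA)
end

section
/- Let G be a finite group, X a conjugacy class of G, and p any prime. Then in the group ring ℤG, the element X̲^p (the p-th power of the class sum) is a nonnegative integer linear combination ∑_Y a_Y Y̲ over the conjugacy classes Y of G, and for every conjugacy class Y one has: a_Y·|Y| ≡ |X| (mod p) if Y = X^{(p)}, and a_Y·|Y| ≡ 0 (mod p) if Y ≠ X^{(p)}. -/
open scoped Pointwise

section Aux

variable {G : Type*} [Group G] [Fintype G] [DecidableEq G]

lemma mem_conjClass {g h : G} : h ∈ conjClass g ↔ ∃ c : G, c * g * c⁻¹ = h := by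
  simp [conjClass]

lemma conj_mem_conjClass {g h : G} (hh : h ∈ conjClass g) (c : G) :
    c * h * c⁻¹ ∈ conjClass g := by
  obtain ⟨d, rfl⟩ := mem_conjClass.1 hh
  exact mem_conjClass.2 ⟨c * d, by group⟩

lemma conjClass_eq_of_mem {g h : G} (hh : h ∈ conjClass g) : conjClass h = conjClass g := by
  obtain ⟨c, rfl⟩ := mem_conjClass.1 hh
  ext z
  simp only [mem_conjClass]
  constructor
  · rintro ⟨d, rfl⟩; exact ⟨d * c, by group⟩
  · rintro ⟨d, rfl⟩; exact ⟨d * c⁻¹, by group⟩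

lemma image_pow_conjClass (g : G) (n : ℕ) :
    (conjClass g).image (fun x => x ^ n) = conjClass (g ^ n) := by
  ext z
  simp only [Finset.mem_image, mem_conjClass]
  constructor
  · rintro ⟨x, hx, rfl⟩
    obtain ⟨c, rfl⟩ := hx
    exact ⟨c, conj_pow.symm⟩
  · rintro ⟨c, rfl⟩
    exact ⟨c * g * c⁻¹, ⟨c, rfl⟩, conj_pow⟩

/-- Tuples of length `n` with entries in `X` and ordered product `y`. -/
def tup (X : Finset G) (n : ℕ) (y : G) : Finset (Fin n → G) :=
  (Fintype.piFinset fun _ => X).filter fun f => (List.ofFn f).prod = y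

lemma mem_tup {X : Finset G} {n : ℕ} {y : G} {f : Fin n → G} :
    f ∈ tup X n y ↔ (∀ i, f i ∈ X) ∧ (List.ofFn f).prod = y := by
  simp [tup, Fintype.mem_piFinset]

lemma clsSum_pow_apply (X : Finset G) (n : ℕ) (y : G) :
    (clsSum X ^ n).coeff y = ((tup X n y).card : ℤ) := by
  induction n generalizing y with
  | zero =>
    rw [pow_zero]
    by_cases hy : y = 1
    · subst hy
      have h1 : tup X 0 (1 : G) = {(fun i => i.elim0 : Fin 0 → G)} := by
        ext f
        simp only [mem_tup, List.ofFn_zero, List.prod_nil, Finset.mem_singleton, and_true]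
        constructor
        · intro _; funext i; exact i.elim0
        · intro _ i; exact i.elim0
      rw [h1, Finset.card_singleton]
      simp [MonoidAlgebra.one_def, MonoidAlgebra.coeff_single_apply]
    · have h1 : tup X 0 y = ∅ := by
        ext f
        simp only [mem_tup, List.ofFn_zero, List.prod_nil, Finset.notMem_empty,
          iff_false, not_and]
        exact fun _ h => hy h.symm
      rw [h1, Finset.card_empty]
      simp [MonoidAlgebra.one_def, MonoidAlgebra.coeff_single_apply, Ne.symm hy]
  | succ n ih =>
    rw [pow_succ']
    have expand : (clsSum X * clsSum X ^ n).coeff y = ∑ x ∈ X, (clsSum X ^ n).coeff (x⁻¹ * y) := by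
      rw [clsSum, Finset.sum_mul, MonoidAlgebra.coeff_sum, Finsupp.finset_sum_apply]
      exact Finset.sum_congr rfl fun x hx => by
        rw [MonoidAlgebra.coeff_single_mul_apply, one_mul]
    have hcard : (tup X (n + 1) y).card = ∑ x ∈ X, (tup X n (x⁻¹ * y)).card := by
      rw [Finset.card_eq_sum_card_fiberwise (f := fun f => f 0) (s := tup X (n + 1) y) (t := X)
        (fun f hf => (mem_tup.1 hf).1 0)]
      refine Finset.sum_congr rfl fun x hx => ?_
      refine Finset.card_bij' (fun f _ => (Fin.tail f : Fin n → G))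
        (fun g _ => (Fin.cons x g : Fin (n + 1) → G)) ?_ ?_ ?_ ?_
      · intro f hf
        rw [Finset.mem_filter] at hf
        obtain ⟨hf, hf0⟩ := hf
        rw [mem_tup] at hf ⊢
        refine ⟨fun i => hf.1 i.succ, ?_⟩
        have h2 := hf.2
        rw [List.ofFn_succ, List.prod_cons, hf0] at h2
        exact eq_inv_mul_iff_mul_eq.2 h2
      · intro g hg
        rw [mem_tup] at hg
        rw [Finset.mem_filter, mem_tup]
        refine ⟨⟨fun i => ?_, ?_⟩, by simp⟩
        · refine Fin.cases ?_ ?_ i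
          · simpa using hx
          · intro j; simpa using hg.1 j
        · rw [List.ofFn_succ, List.prod_cons]
          simp only [Fin.cons_zero, Fin.cons_succ]
          rw [show (List.ofFn fun i : Fin n => g i) = List.ofFn g from rfl, hg.2,
            mul_inv_cancel_left]
      · intro f hf
        rw [Finset.mem_filter] at hf
        show Fin.cons x (Fin.tail f) = f
        funext i
        refine Fin.cases ?_ ?_ i
        · simpa using hf.2.symm
        · intro j; simp [Fin.tail]
      · intro g hg
        exact Fin.tail_cons (α := fun _ => G) x g
    rw [expand, hcard]
    push_cast
    exact Finset.sum_congr rfl fun x hx => ih (x⁻¹ * y)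

lemma clsSum_comm (X : Finset G) (hX : ∃ g : G, X = conjClass g) (c : G) :
    Commute (MonoidAlgebra.single c (1 : ℤ)) (clsSum X) := by
  obtain ⟨g, rfl⟩ := hX
  show _ = _
  rw [clsSum, Finset.mul_sum, Finset.sum_mul]
  refine Finset.sum_bij' (fun x _ => c * x * c⁻¹) (fun x _ => c⁻¹ * x * c)
    (fun x hx => conj_mem_conjClass hx c) (fun x hx => ?_) ?_ ?_ ?_
  · have := conj_mem_conjClass hx c⁻¹
    simpa using this
  · intro x hx; group
  · intro x hx; group
  · intro x hx
    rw [MonoidAlgebra.single_mul_single, MonoidAlgebra.single_mul_single, one_mul]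
    congr 1
    group

lemma clsSum_pow_conj (X : Finset G) (hX : ∃ g : G, X = conjClass g) (p : ℕ) (y c : G) :
    (clsSum X ^ p).coeff (c * y * c⁻¹) = (clsSum X ^ p).coeff y := by
  have h := ((clsSum_comm X hX c).pow_right p).eq
  have h2 : (MonoidAlgebra.single c (1:ℤ) * clsSum X ^ p).coeff (c * y)
      = ((clsSum X ^ p * MonoidAlgebra.single c 1 : MonoidAlgebra ℤ G)).coeff (c * y) := by rw [h]
  rw [MonoidAlgebra.coeff_single_mul_apply, MonoidAlgebra.coeff_mul_single_apply] at h2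
  simpa [inv_mul_cancel_left] using h2.symm

/-- Ordered product of a `ZMod p`-indexed tuple. -/
def prZ (p : ℕ) (f : ZMod p → G) : G := (List.ofFn fun i : Fin p => f ((i : ℕ) : ZMod p)).prod

lemma tupZ_card (X : Finset G) (p : ℕ) [NeZero p] (z : G) :
    ((Fintype.piFinset fun _ : ZMod p => X).filter fun f => prZ p f = z).card
      = (tup X p z).card := by
  refine Finset.card_bij' (fun f _ => fun i : Fin p => f ((i : ℕ) : ZMod p))
    (fun g _ => fun j : ZMod p => g ⟨j.val, ZMod.val_lt j⟩) ?_ ?_ ?_ ?_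
  · intro f hf
    rw [Finset.mem_filter, Fintype.mem_piFinset] at hf
    rw [mem_tup]
    exact ⟨fun i => hf.1 _, hf.2⟩
  · intro g hg
    rw [mem_tup] at hg
    rw [Finset.mem_filter, Fintype.mem_piFinset]
    refine ⟨fun j => hg.1 _, ?_⟩
    have heq : prZ p (fun j : ZMod p => g ⟨j.val, ZMod.val_lt j⟩) = (List.ofFn g).prod := by
      show (List.ofFn fun i : Fin p => g ⟨(((i : ℕ) : ZMod p)).val, ZMod.val_lt _⟩).prod
        = (List.ofFn g).prod
      exact congrArg List.prod (congrArg List.ofFn (funext fun i =>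
        congrArg g (Fin.ext (ZMod.val_cast_of_lt i.isLt))))
    show prZ p (fun j : ZMod p => g ⟨j.val, ZMod.val_lt j⟩) = z
    exact heq.trans hg.2
  · intro f hf
    funext j
    show f (((j.val : ℕ) : ZMod p)) = f j
    congr 1
    exact ZMod.natCast_rightInverse j
  · intro g hg
    funext i
    show g ⟨(((i : ℕ) : ZMod p)).val, _⟩ = g i
    congr 1
    exact Fin.ext (ZMod.val_cast_of_lt i.isLt)

lemma S_card (X : Finset G) (p : ℕ) [NeZero p] (y : G) :
    ((Fintype.piFinset fun _ : ZMod p => X).filter fun f => prZ p f ∈ conjClass y).card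
      = ∑ z ∈ conjClass y, (tup X p z).card := by
  rw [Finset.card_eq_sum_card_fiberwise (f := fun f => prZ p f)
    (s := (Fintype.piFinset fun _ : ZMod p => X).filter fun f => prZ p f ∈ conjClass y) (t := conjClass y)
    (fun f hf => (Finset.mem_filter.1 hf).2)]
  refine Finset.sum_congr rfl fun z hz => ?_
  rw [← tupZ_card]
  congr 1
  ext f
  simp only [Finset.mem_filter, Fintype.mem_piFinset]
  constructor
  · rintro ⟨⟨h1, _⟩, h3⟩; exact ⟨h1, h3⟩
  · rintro ⟨h1, h2⟩; exact ⟨⟨h1, h2 ▸ hz⟩, h2⟩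

lemma prZ_const (p : ℕ) [NeZero p] (x : G) : prZ p (fun _ => x) = x ^ p := by
  show (List.ofFn fun _ : Fin p => x).prod = x ^ p
  rw [List.ofFn_const, List.prod_replicate]

lemma prZ_rot_one (p : ℕ) [NeZero p] (f : ZMod p → G) :
    prZ p (fun i => f (i + 1)) = (f 0)⁻¹ * prZ p f * f 0 := by
  obtain ⟨n, rfl⟩ : ∃ n, p = n + 1 := ⟨p - 1, (Nat.succ_pred_eq_of_pos (NeZero.pos p)).symm⟩
  show (List.ofFn fun i : Fin (n+1) => f (((i : ℕ) : ZMod (n+1)) + 1)).prod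
    = (f 0)⁻¹ * (List.ofFn fun i : Fin (n+1) => f ((i : ℕ) : ZMod (n+1))).prod * f 0
  rw [List.ofFn_succ' (f := fun i : Fin (n+1) => f (((i : ℕ) : ZMod (n+1)) + 1)),
      List.ofFn_succ (f := fun i : Fin (n+1) => f ((i : ℕ) : ZMod (n+1)))]
  rw [List.prod_concat, List.prod_cons]
  have h0 : (((0 : Fin (n+1)) : ℕ) : ZMod (n+1)) = 0 := by norm_num
  have hlast : ((((Fin.last n) : ℕ) : ZMod (n+1)) + 1) = 0 := by
    rw [Fin.val_last]
    have h1 : ((n : ZMod (n+1)) + 1) = ((n + 1 : ℕ) : ZMod (n+1)) := by push_cast; ring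
    rw [h1, ZMod.natCast_self]
  have hmid : (fun i : Fin n => f ((((Fin.castSucc i) : ℕ) : ZMod (n+1)) + 1))
      = fun i : Fin n => f (((Fin.succ i : ℕ) : ZMod (n+1))) := by
    funext i
    congr 1
    rw [Fin.coe_castSucc, Fin.val_succ]
    push_cast; ring
  rw [hmid, hlast, h0]
  group

lemma prZ_shift_conj (p : ℕ) [NeZero p] (f : ZMod p → G) (k : ZMod p) :
    ∃ c : G, prZ p (fun i => f (i + k)) = c * prZ p f * c⁻¹ := by
  have key : ∀ m : ℕ, ∃ c : G, prZ p (fun i => f (i + (m : ZMod p))) = c * prZ p f * c⁻¹ := by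
    intro m
    induction m with
    | zero => exact ⟨1, by simp⟩
    | succ m ih =>
      obtain ⟨c, hc⟩ := ih
      refine ⟨((fun j : ZMod p => f (j + (m : ZMod p))) 0)⁻¹ * c, ?_⟩
      have harg : (fun i : ZMod p => f (i + ((m + 1 : ℕ) : ZMod p)))
          = fun i : ZMod p => (fun j : ZMod p => f (j + (m : ZMod p))) (i + 1) := by
        funext i
        congr 1
        push_cast
        ring
      rw [harg, prZ_rot_one p (fun j : ZMod p => f (j + (m : ZMod p))), hc]
      group
  obtain ⟨c, hc⟩ := key (ZMod.val k)
  refine ⟨c, ?_⟩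
  rw [← hc]
  congr 1
  funext i
  congr 1
  rw [ZMod.natCast_rightInverse k]

lemma rot_card_modEq (X : Finset G) (p : ℕ) [NeZero p] (hp : p.Prime) (y : G) :
    ((Fintype.piFinset fun _ : ZMod p => X).filter fun f => prZ p f ∈ conjClass y).card
      ≡ (X.filter fun x => x ^ p ∈ conjClass y).card [MOD p] := by
  haveI : Fact p.Prime := ⟨hp⟩
  set S := (Fintype.piFinset fun _ : ZMod p => X).filter fun f => prZ p f ∈ conjClass y with hS
  have hmemS : ∀ f : ZMod p → G, f ∈ S ↔ (∀ i, f i ∈ X) ∧ prZ p f ∈ conjClass y := by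
    intro f; rw [hS, Finset.mem_filter, Fintype.mem_piFinset]
  have hshift : ∀ (k : ZMod p) (f : ZMod p → G), f ∈ S → (fun i => f (i + k)) ∈ S := by
    intro k f hf
    rw [hmemS] at hf ⊢
    refine ⟨fun i => hf.1 _, ?_⟩
    obtain ⟨c, hc⟩ := prZ_shift_conj p f k
    rw [hc]
    exact conj_mem_conjClass hf.2 c
  letI smul : SMul (Multiplicative (ZMod p)) {f // f ∈ S} :=
    ⟨fun k f => ⟨fun i => f.1 (i + Multiplicative.toAdd k), hshift _ _ f.2⟩⟩
  letI act : MulAction (Multiplicative (ZMod p)) {f // f ∈ S} :=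
    { one_smul := fun f => Subtype.ext (funext fun i => by
        show f.1 (i + Multiplicative.toAdd (1 : Multiplicative (ZMod p))) = f.1 i
        norm_num)
      mul_smul := fun k j f => Subtype.ext (funext fun i => by
        show f.1 (i + Multiplicative.toAdd (k * j))
          = f.1 (i + Multiplicative.toAdd k + Multiplicative.toAdd j)
        have harg : i + Multiplicative.toAdd (k * j)
            = i + Multiplicative.toAdd k + Multiplicative.toAdd j := by
          show i + (Multiplicative.toAdd k + Multiplicative.toAdd j) = _
          rw [add_assoc]
        rw [harg]) }
  have hPG : IsPGroup p (Multiplicative (ZMod p)) := IsPGroup.of_card (n := 1) (by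
    rw [pow_one, Nat.card_eq_fintype_card, Fintype.card_multiplicative, ZMod.card])
  have hmod := hPG.card_modEq_card_fixedPoints {f // f ∈ S}
  have hcardT : Nat.card {f // f ∈ S} = S.card := Nat.card_eq_finsetCard S
  have hconst : ∀ a : {f // f ∈ S},
      a ∈ MulAction.fixedPoints (Multiplicative (ZMod p)) {f // f ∈ S} →
      ∀ i : ZMod p, a.1 i = a.1 0 := by
    intro a ha i
    rw [MulAction.mem_fixedPoints] at ha
    have h1 : ∀ j : ZMod p, a.1 (j + 1) = a.1 j := by
      intro j
      exact congrFun (congrArg Subtype.val (ha (Multiplicative.ofAdd (1 : ZMod p)))) j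
    have h2 : ∀ m : ℕ, a.1 ((m : ZMod p)) = a.1 0 := by
      intro m
      induction m with
      | zero => norm_num
      | succ m ih =>
        have : ((m + 1 : ℕ) : ZMod p) = (m : ZMod p) + 1 := by push_cast; ring
        rw [this, h1, ih]
    have := h2 (ZMod.val i)
    rwa [ZMod.natCast_rightInverse i] at this
  have hfix : Nat.card (MulAction.fixedPoints (Multiplicative (ZMod p)) {f // f ∈ S})
      = (X.filter fun x => x ^ p ∈ conjClass y).card := by
    rw [← Nat.card_eq_finsetCard]
    refine Nat.card_congr ?_
    refine
      { toFun := fun a => ⟨a.1.1 0, ?_⟩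
        invFun := fun x => ⟨⟨fun _ => x.1, ?_⟩, ?_⟩
        left_inv := ?_
        right_inv := ?_ }
    · rw [Finset.mem_filter]
      have hm := (hmemS a.1.1).1 a.1.2
      refine ⟨hm.1 0, ?_⟩
      have : prZ p a.1.1 = (a.1.1 0) ^ p := by
        rw [show a.1.1 = fun _ => a.1.1 0 from funext fun i => hconst a.1 a.2 i]
        exact prZ_const p _
      rw [← this]
      exact hm.2
    · rw [hmemS]
      have hx := Finset.mem_filter.1 x.2
      exact ⟨fun _ => hx.1, by rw [prZ_const]; exact hx.2⟩
    · rw [MulAction.mem_fixedPoints]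
      intro m
      exact Subtype.ext (funext fun i => rfl)
    · intro a
      exact Subtype.ext (Subtype.ext (funext fun i => (hconst a.1 a.2 i).symm))
    · intro x
      exact Subtype.ext rfl
  rw [hcardT, hfix] at hmod
  exact hmod

end Aux

private theorem classSum_pow_prime_aux {G : Type*} [Group G] [Fintype G] [DecidableEq G]
    (X : Finset G) (hX : ∃ g : G, X = conjClass g) (p : ℕ) (hp : p.Prime) :
    (∀ y : G, 0 ≤ (clsSum X ^ p).coeff y) ∧
    (∀ y : G, ∀ z ∈ conjClass y, (clsSum X ^ p).coeff z = (clsSum X ^ p).coeff y) ∧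
    (∀ y : G, conjClass y = X.image (fun x => x ^ p) →
      ((clsSum X ^ p).coeff y * (conjClass y).card : ℤ) ≡ (X.card : ℤ) [ZMOD (p : ℤ)]) ∧
    (∀ y : G, conjClass y ≠ X.image (fun x => x ^ p) →
      ((clsSum X ^ p).coeff y * (conjClass y).card : ℤ) ≡ 0 [ZMOD (p : ℤ)]) := by
  haveI : Fact p.Prime := ⟨hp⟩
  haveI : NeZero p := ⟨hp.ne_zero⟩
  have key : ∀ y : G, ((clsSum X ^ p).coeff y * (conjClass y).card : ℤ)
      ≡ ((X.filter fun x => x ^ p ∈ conjClass y).card : ℤ) [ZMOD (p : ℤ)] := by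
    intro y
    have h2 : ∑ z ∈ conjClass y, (clsSum X ^ p).coeff z
        = (clsSum X ^ p).coeff y * (conjClass y).card := by
      rw [Finset.sum_congr rfl (g := fun _ => (clsSum X ^ p).coeff y) (fun z hz => by
        obtain ⟨c, rfl⟩ := mem_conjClass.1 hz
        exact clsSum_pow_conj X hX p y c)]
      rw [Finset.sum_const, nsmul_eq_mul, mul_comm]
    have h3 : ∑ z ∈ conjClass y, (clsSum X ^ p).coeff z
        = ((((Fintype.piFinset fun _ : ZMod p => X).filter
            fun f => prZ p f ∈ conjClass y).card : ℕ) : ℤ) := by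
      rw [Finset.sum_congr rfl (fun z _ => clsSum_pow_apply X p z), S_card X p y]
      push_cast
      rfl
    rw [← h2, h3]
    exact Int.natCast_modEq_iff.2 (rot_card_modEq X p hp y)
  refine ⟨?_, ?_, ?_, ?_⟩
  · intro y
    rw [clsSum_pow_apply]
    exact Int.natCast_nonneg _
  · intro y z hz
    obtain ⟨c, rfl⟩ := mem_conjClass.1 hz
    exact clsSum_pow_conj X hX p y c
  · intro y hEq
    have h4 : X.filter (fun x => x ^ p ∈ conjClass y) = X := by
      refine Finset.filter_eq_self.2 fun x hx => ?_
      rw [hEq]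
      exact Finset.mem_image_of_mem _ hx
    have := key y
    rwa [h4] at this
  · intro y hne
    have h4 : X.filter (fun x => x ^ p ∈ conjClass y) = ∅ := by
      refine Finset.filter_eq_empty_iff.2 fun x hx hmem => ?_
      obtain ⟨g, rfl⟩ := hX
      apply hne
      rw [image_pow_conjClass, ← conjClass_eq_of_mem hmem]
      have hxp : x ^ p ∈ conjClass (g ^ p) := by
        rw [← image_pow_conjClass]
        exact Finset.mem_image_of_mem _ hx
      exact conjClass_eq_of_mem hxp
    have := key y
    rwa [h4, Finset.card_empty, Nat.cast_zero] at this

/-- **Lemma 3.1**. Let `G` be a finite group, `X` a conjugacy class of `G` and `p` a prime.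
Then `X̲^p` is a nonnegative integer linear combination of class sums: its coefficients
are nonnegative and constant on conjugacy classes, and, writing `a_Y` for the coefficient
on the class `Y`, we have `a_Y⬝|Y| ≡ |X| (mod p)` if `Y = X^{(p)}` and
`a_Y⬝|Y| ≡ 0 (mod p)` otherwise. -/
theorem classSum_pow_prime {G : Type*} [Group G] [Fintype G] [DecidableEq G]
    (X : Finset G) (hX : ∃ g : G, X = conjClass g) (p : ℕ) (hp : p.Prime) :
    (∀ y : G, 0 ≤ (clsSum X ^ p).coeff y) ∧
    (∀ y : G, ∀ z ∈ conjClass y, (clsSum X ^ p).coeff z = (clsSum X ^ p).coeff y) ∧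
    (∀ y : G, conjClass y = X.image (fun x => x ^ p) →
      ((clsSum X ^ p).coeff y * (conjClass y).card : ℤ) ≡ (X.card : ℤ) [ZMOD (p : ℤ)]) ∧
    (∀ y : G, conjClass y ≠ X.image (fun x => x ^ p) →
      ((clsSum X ^ p).coeff y * (conjClass y).card : ℤ) ≡ 0 [ZMOD (p : ℤ)]) :=
  classSum_pow_prime_aux X hX p hp
end
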